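/- Let A, B : ℝ → ℝ be C² functions and let u, v : ℝ² → ℝ be two C² functions, each solving L_u(L_u u) = 0 (respectively L_v(L_v v) = 0) on all of ℝ², with u(x,0) = v(x,0) = B(x) and (L_u u)(x,0) = (L_v v)(x,0) = A(x) for all x ∈ ℝ. Set x(c,t) := (A(c)/2)·t² + B(c)·t + c and Ω := {(x(c,t), t) : c, t ∈ ℝ}. Then u = v on Ω; more precisely, u(x(c,t), t) = v(x(c,t), t) = A(c)·t + B(c) for all c, t ∈ ℝ. -/

import Mathlib

/-- The operator `L_u` acting on `v`:  `(L_u v)(x,t) = ∂v/∂t + u·∂v/∂x`,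
with coordinates `(x,t)` on `ℝ × ℝ`. -/
noncomputable def Lop (u v : ℝ × ℝ → ℝ) : ℝ × ℝ → ℝ :=
  fun p => fderiv ℝ v p (0, 1) + u p * fderiv ℝ v p (1, 0)

open Real Set

-- Gronwall-type vanishing lemma
lemma gronwall_zero (f f' : ℝ → ℝ × ℝ) (hf : ∀ t, HasDerivAt f (f' t) t)
    (K : ℝ → ℝ) (hK : Continuous K)
    (hbound : ∀ t, ‖f' t‖ ≤ K t * ‖f t‖) (h0 : f 0 = 0) : ∀ t, f t = 0 := by
  have main : ∀ (g g' : ℝ → ℝ × ℝ), (∀ t, HasDerivAt g (g' t) t) →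
      ∀ (L : ℝ → ℝ), Continuous L → (∀ t, ‖g' t‖ ≤ L t * ‖g t‖) → g 0 = 0 →
      ∀ t, 0 ≤ t → g t = 0 := by
    intro g g' hg L hL hb hg0 t ht
    obtain ⟨x, -, hmax⟩ := (isCompact_Icc (a := (0:ℝ)) (b := t)).exists_isMaxOn
      ⟨0, le_refl 0, ht⟩ hL.continuousOn
    set M := max (L x) 0 with hM
    have key := norm_le_gronwallBound_of_norm_deriv_right_le
      (f := g) (f' := g') (δ := 0) (K := M) (ε := 0) (a := 0) (b := t)
      (fun s _ => (hg s).continuousAt.continuousWithinAt)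
      (fun s _ => (hg s).hasDerivWithinAt)
      (by simp [hg0])
      (fun s hs => by
        have h1 : L s * ‖g s‖ ≤ M * ‖g s‖ := by
          apply mul_le_mul_of_nonneg_right _ (norm_nonneg _)
          exact le_max_of_le_left (hmax ⟨hs.1, le_of_lt hs.2⟩)
        have := hb s
        linarith)
      t ⟨ht, le_refl t⟩
    rw [gronwallBound_ε0_δ0] at key
    exact norm_le_zero_iff.mp key
  intro t
  rcases le_or_gt 0 t with h | h
  · exact main f f' hf K hK hbound h0 t h
  · have hneg : ∀ s : ℝ, HasDerivAt (fun s => f (-s)) ((-1 : ℝ) • f' (-s)) s := by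
      intro s
      exact (hf (-s)).scomp s (hasDerivAt_neg s)
    have := main (fun s => f (-s)) (fun s => (-1 : ℝ) • f' (-s)) hneg
      (fun s => K (-s)) (hK.comp continuous_neg)
      (fun s => by simpa using hbound (-s)) (by simpa using h0) (-t) (by linarith)
    simpa using this

lemma key_char (A B : ℝ → ℝ) (u : ℝ × ℝ → ℝ) (hu : ContDiff ℝ 2 u)
    (hupde : ∀ p : ℝ × ℝ, Lop u (Lop u u) p = 0)
    (hu0 : ∀ x : ℝ, u (x, 0) = B x) (huA : ∀ x : ℝ, Lop u u (x, 0) = A x)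
    (c t : ℝ) : u (A c / 2 * t ^ 2 + B c * t + c, t) = A c * t + B c := by
  set a := A c
  set b := B c
  set γ : ℝ → ℝ × ℝ := fun t => (a / 2 * t ^ 2 + b * t + c, t) with hγdef
  set w : ℝ × ℝ → ℝ := Lop u u with hwdef
  -- regularity
  have hud : Differentiable ℝ u := hu.differentiable two_ne_zero
  have hfd : ContDiff ℝ 1 (fderiv ℝ u) := hu.fderiv_right (by norm_num)
  have hw : ContDiff ℝ 1 w := by
    have h1 : ContDiff ℝ 1 (fun p => fderiv ℝ u p ((0:ℝ), (1:ℝ))) :=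
      hfd.clm_apply contDiff_const
    have h2 : ContDiff ℝ 1 (fun p => fderiv ℝ u p ((1:ℝ), (0:ℝ))) :=
      hfd.clm_apply contDiff_const
    exact h1.add ((hu.of_le one_le_two).mul h2)
  have hwd : Differentiable ℝ w := hw.differentiable one_ne_zero
  have hwfc : Continuous (fderiv ℝ w) := hw.continuous_fderiv one_ne_zero
  -- the curve γ
  have hγ : ∀ t : ℝ, HasDerivAt γ (a * t + b, 1) t := by
    intro t
    have h1 : HasDerivAt (fun t : ℝ => a / 2 * t ^ 2 + b * t + c) (a * t + b) t := by
      have := (((hasDerivAt_pow 2 t).const_mul (a/2)).add ((hasDerivAt_id t).const_mul b)).add_const c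
      refine this.congr_deriv ?_
      push_cast
      ring
    exact h1.prodMk (hasDerivAt_id t)
  have hγc : Continuous γ := by
    fun_prop
  -- linear algebra fact
  have linfact : ∀ (L : ℝ × ℝ →L[ℝ] ℝ) (s : ℝ), L (s, 1) = s * L (1, 0) + L (0, 1) := by
    intro L s
    have hv : ((s, 1) : ℝ × ℝ) = s • ((1:ℝ), (0:ℝ)) + ((0:ℝ), (1:ℝ)) := by
      simp [Prod.ext_iff]
    rw [hv, map_add, map_smul, smul_eq_mul]
  -- the functions
  set h : ℝ → ℝ := fun t => u (γ t) - (a * t + b) with hhdef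
  set k : ℝ → ℝ := fun t => w (γ t) - a with hkdef
  set ux : ℝ → ℝ := fun t => fderiv ℝ u (γ t) ((1:ℝ), (0:ℝ)) with huxdef
  set wx : ℝ → ℝ := fun t => fderiv ℝ w (γ t) ((1:ℝ), (0:ℝ)) with hwxdef
  set f : ℝ → ℝ × ℝ := fun t => (h t, k t) with hfdef
  set f' : ℝ → ℝ × ℝ := fun t => (k t - h t * ux t, -(h t * wx t)) with hf'def
  have hLopγ : ∀ s : ℝ, w (γ s) = fderiv ℝ u (γ s) ((0:ℝ),(1:ℝ)) + u (γ s) * ux s := by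
    intro s; rfl
  have hf : ∀ t : ℝ, HasDerivAt f (f' t) t := by
    intro t
    have hcomp_u : HasDerivAt (fun s => u (γ s)) (fderiv ℝ u (γ t) (a * t + b, 1)) t :=
      (hud (γ t)).hasFDerivAt.comp_hasDerivAt t (hγ t)
    have hcomp_w : HasDerivAt (fun s => w (γ s)) (fderiv ℝ w (γ t) (a * t + b, 1)) t :=
      (hwd (γ t)).hasFDerivAt.comp_hasDerivAt t (hγ t)
    have hline : HasDerivAt (fun s : ℝ => a * s + b) a t := by
      simpa using ((hasDerivAt_id t).const_mul a).add_const b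
    have h1 : HasDerivAt h (k t - h t * ux t) t := by
      have := hcomp_u.sub hline
      refine this.congr_deriv ?_
      rw [linfact]
      have hw' := hLopγ t
      simp only [hhdef, hkdef, huxdef]
      rw [hw']
      ring
    have h2 : HasDerivAt k (-(h t * wx t)) t := by
      have := hcomp_w.sub_const a
      refine this.congr_deriv ?_
      rw [linfact]
      have hpde := hupde (γ t)
      have hpde' : fderiv ℝ w (γ t) ((0:ℝ),(1:ℝ)) = - (u (γ t) * wx t) := by
        have : fderiv ℝ w (γ t) ((0:ℝ),(1:ℝ)) + u (γ t) * fderiv ℝ w (γ t) ((1:ℝ),(0:ℝ)) = 0 := hpde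
        simp only [hwxdef]
        linarith
      rw [hpde']
      simp only [hhdef]
      ring
    exact h1.prodMk h2
  -- the bound
  set K : ℝ → ℝ := fun t => 1 + |ux t| + |wx t| with hKdef
  have hKc : Continuous K := by
    have hux : Continuous ux := by
      have : Continuous (fun p : ℝ × ℝ => fderiv ℝ u p ((1:ℝ),(0:ℝ))) :=
        (hfd.clm_apply contDiff_const).continuous
      exact this.comp hγc
    have hwx : Continuous wx := by
      have : Continuous (fun p : ℝ × ℝ => fderiv ℝ w p ((1:ℝ),(0:ℝ))) :=
        (ContinuousLinearMap.apply ℝ ℝ ((1:ℝ),(0:ℝ))).continuous.comp hwfc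
      exact this.comp hγc
    exact (continuous_const.add hux.abs).add hwx.abs
  have hbound : ∀ t : ℝ, ‖f' t‖ ≤ K t * ‖f t‖ := by
    intro t
    have hfn : ‖f t‖ = max |h t| |k t| := by
      simp [hfdef, Prod.norm_def, Real.norm_eq_abs]
    have hfn' : ‖f' t‖ = max |k t - h t * ux t| (|h t| * |wx t|) := by
      simp [hf'def, Prod.norm_def, Real.norm_eq_abs, abs_mul]
    rw [hfn, hfn']
    have hh : |h t| ≤ max |h t| |k t| := le_max_left _ _
    have hk : |k t| ≤ max |h t| |k t| := le_max_right _ _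
    have hm0 : (0:ℝ) ≤ max |h t| |k t| := le_trans (abs_nonneg _) hh
    apply max_le
    · calc |k t - h t * ux t| ≤ |k t| + |h t| * |ux t| := by
            rw [← abs_mul]; exact abs_sub _ _
          _ ≤ max |h t| |k t| + max |h t| |k t| * |ux t| :=
            add_le_add hk (mul_le_mul_of_nonneg_right hh (abs_nonneg _))
          _ ≤ K t * max |h t| |k t| := by
            simp only [hKdef]
            nlinarith [abs_nonneg (wx t)]
    · calc |h t| * |wx t|
          _ ≤ max |h t| |k t| * |wx t| := mul_le_mul_of_nonneg_right hh (abs_nonneg _)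
          _ ≤ K t * max |h t| |k t| := by
            simp only [hKdef]
            nlinarith [abs_nonneg (ux t)]
  have hγ0 : γ 0 = (c, 0) := by simp [hγdef]
  have hf0 : f 0 = 0 := by
    have h0 : h 0 = 0 := by simp [hhdef, hγ0, hu0 c, b]
    have k0 : k 0 = 0 := by
      simp only [hkdef, hγ0]
      rw [show w (c,0) = A c from huA c]
      simp [a]
    simp [hfdef, h0, k0, Prod.ext_iff]
  have hzero := gronwall_zero f f' hf K hKc hbound hf0 t
  have : h t = 0 := by
    have := congrArg Prod.fst hzero
    simpa [hfdef] using this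
  have := this
  simp only [hhdef, hγdef] at this
  linarith

theorem stmt12 (A B : ℝ → ℝ) (hA : ContDiff ℝ 2 A) (hB : ContDiff ℝ 2 B)
    (u v : ℝ × ℝ → ℝ) (hu : ContDiff ℝ 2 u) (hv : ContDiff ℝ 2 v)
    (hupde : ∀ p : ℝ × ℝ, Lop u (Lop u u) p = 0)
    (hvpde : ∀ p : ℝ × ℝ, Lop v (Lop v v) p = 0)
    (hu0 : ∀ x : ℝ, u (x, 0) = B x) (hv0 : ∀ x : ℝ, v (x, 0) = B x)
    (huA : ∀ x : ℝ, Lop u u (x, 0) = A x) (hvA : ∀ x : ℝ, Lop v v (x, 0) = A x)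
    (X : ℝ → ℝ → ℝ) (hX : ∀ c t, X c t = A c / 2 * t ^ 2 + B c * t + c) :
    (∀ c t : ℝ, u (X c t, t) = A c * t + B c ∧ v (X c t, t) = A c * t + B c) ∧
    ∀ p ∈ {p : ℝ × ℝ | ∃ c t : ℝ, p = (X c t, t)}, u p = v p := by
  have hu' := fun c t => key_char A B u hu hupde hu0 huA c t
  have hv' := fun c t => key_char A B v hv hvpde hv0 hvA c t
  constructor
  · intro c t
    rw [hX]
    exact ⟨hu' c t, hv' c t⟩
  · rintro p ⟨c, t, rfl⟩
    rw [hX, hu' c t, hv' c t]
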